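/- arXiv:math/0211329 — 5 statements merged into one kernel-verified Lean document; each statement's English description precedes it below -/
import Mathlib

section
/- Let R be a commutative Noetherian ring, let I be an ideal of R, and let x ∈ R. Then x lies in the integral closure of I (i.e., x satisfies an equation x^n + a_1 x^{n-1} + ⋯ + a_n = 0 with a_j ∈ I^j for 1 ≤ j ≤ n) if and only if there exist an element c ∈ R not contained in any minimal prime of R and an integer n_0 such that c x^n ∈ I^n for all n ≥ n_0. -/
open Ideal

/-- `R⁰`: the set of elements of `R` not contained in any minimal prime. -/
def MemRzero {R : Type*} [CommRing R] (c : R) : Prop := ∀ P ∈ minimalPrimes R, c ∉ P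

/-- `x` is integral over the ideal `I`: it satisfies an equation
`x ^ n + a 1 * x ^ (n-1) + ⋯ + a n = 0` with `a j ∈ I ^ j` for `1 ≤ j ≤ n`. -/
def MemIntegralClosure {R : Type*} [CommRing R] (I : Ideal R) (x : R) : Prop :=
  ∃ n : ℕ, 0 < n ∧ ∃ a : ℕ → R, (∀ j, 1 ≤ j → j ≤ n → a j ∈ I ^ j) ∧
    x ^ n + ∑ j ∈ Finset.Icc 1 n, a j * x ^ (n - j) = 0

open Polynomial

namespace IntegralClosureAux

variable {R : Type*} [CommRing R]


/-- A monic polynomial of degree `n` whose `i`-th coefficient lies in `I ^ (n - i)`. -/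
def GoodPoly (I : Ideal R) (n : ℕ) (p : R[X]) : Prop :=
  p.Monic ∧ p.natDegree = n ∧ ∀ i, p.coeff i ∈ I ^ (n - i)

theorem GoodPoly.mul {I : Ideal R} {n m : ℕ} {p q : R[X]}
    (hp : GoodPoly I n p) (hq : GoodPoly I m q) : GoodPoly I (n + m) (p * q) := by
  obtain ⟨hp1, hp2, hp3⟩ := hp
  obtain ⟨hq1, hq2, hq3⟩ := hq
  refine ⟨hp1.mul hq1, by rw [hp1.natDegree_mul hq1, hp2, hq2], fun i => ?_⟩
  rw [coeff_mul]
  refine Submodule.sum_mem _ fun uv huv => ?_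
  rw [Finset.HasAntidiagonal.mem_antidiagonal] at huv
  have h1 : p.coeff uv.1 * q.coeff uv.2 ∈ I ^ ((n - uv.1) + (m - uv.2)) := by
    rw [pow_add]; exact Ideal.mul_mem_mul (hp3 _) (hq3 _)
  exact Ideal.pow_le_pow_right (by omega) h1

theorem GoodPoly.pow {I : Ideal R} {n : ℕ} {p : R[X]} (hp : GoodPoly I n p) (k : ℕ) :
    GoodPoly I (n * k) (p ^ k) := by
  induction k with
  | zero => exact ⟨monic_one, natDegree_one, fun i => by
      rw [Nat.mul_zero, Nat.zero_sub, pow_zero, Ideal.one_eq_top]; exact Submodule.mem_top⟩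
  | succ k ih =>
      have := ih.mul hp
      rwa [← pow_succ, ← Nat.mul_succ] at this


theorem GoodPoly.memIntegralClosure {I : Ideal R} {n : ℕ} {p : R[X]} {x : R}
    (hp : GoodPoly I n p) (hn : 0 < n) (hx : p.eval x = 0) : MemIntegralClosure I x := by
  obtain ⟨hp1, hp2, hp3⟩ := hp
  refine ⟨n, hn, fun j => p.coeff (n - j), fun j hj1 hj2 => ?_, ?_⟩
  · have := hp3 (n - j)
    rwa [show n - (n - j) = j by omega] at this
  · have he : p.eval x = ∑ i ∈ Finset.range (n + 1), p.coeff i * x ^ i := by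
      rw [eval_eq_sum_range, hp2]
    rw [Finset.range_add_one, Finset.sum_insert (by simp)] at he
    have hc : p.coeff n = 1 := by rw [← hp2]; exact hp1.coeff_natDegree
    rw [hc, one_mul] at he
    have hre : ∑ i ∈ Finset.range n, p.coeff i * x ^ i
        = ∑ j ∈ Finset.Icc 1 n, p.coeff (n - j) * x ^ (n - j) := by
      refine Finset.sum_nbij' (fun i => n - i) (fun j => n - j) ?_ ?_ ?_ ?_ ?_
      · intro a ha; simp only [Finset.mem_range] at ha; simp only [Finset.mem_Icc]; omega
      · intro b hb; simp only [Finset.mem_Icc] at hb; simp only [Finset.mem_range]; omega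
      · intro a ha; simp only [Finset.mem_range] at ha; omega
      · intro b hb; simp only [Finset.mem_Icc] at hb; omega
      · intro a ha; simp only [Finset.mem_range] at ha
        rw [show n - (n - a) = a by omega]
    rw [← hre, ← he, hx]

theorem goodPoly_of_data [Nontrivial R] {I : Ideal R} {n : ℕ} (hn : 0 < n) (a : ℕ → R)
    (ha : ∀ j, 1 ≤ j → j ≤ n → a j ∈ I ^ j) :
    GoodPoly I n (X ^ n + ∑ j ∈ Finset.Icc 1 n, C (a j) * X ^ (n - j)) ∧
    ∀ x : R, (X ^ n + ∑ j ∈ Finset.Icc 1 n, C (a j) * X ^ (n - j)).eval x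
      = x ^ n + ∑ j ∈ Finset.Icc 1 n, a j * x ^ (n - j) := by
  set p : R[X] := X ^ n + ∑ j ∈ Finset.Icc 1 n, C (a j) * X ^ (n - j) with hpdef
  have hcoeff : ∀ i, p.coeff i = (if i = n then 1 else 0)
      + ∑ j ∈ Finset.Icc 1 n, (if i = n - j then a j else 0) := by
    intro i
    simp [hpdef, coeff_X_pow, coeff_C_mul, Finset.sum_ite_eq]
  have hcn : p.coeff n = 1 := by
    rw [hcoeff]
    rw [if_pos rfl, Finset.sum_eq_zero, add_zero]
    intro j hj
    simp only [Finset.mem_Icc] at hj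
    rw [if_neg (by omega)]
  have hdeg : p.natDegree ≤ n := by
    refine (natDegree_add_le _ _).trans (max_le (natDegree_X_pow_le n) ?_)
    refine (natDegree_sum_le _ _).trans ?_
    rw [Finset.fold_max_le]
    refine ⟨Nat.zero_le n, fun j hj => ?_⟩
    exact (natDegree_C_mul_le _ _).trans ((natDegree_X_pow_le _).trans (Nat.sub_le n j))
  have hmonic : p.Monic := monic_of_natDegree_le_of_coeff_eq_one n hdeg hcn
  have hdeg' : p.natDegree = n :=
    le_antisymm hdeg (le_natDegree_of_ne_zero (by rw [hcn]; exact one_ne_zero))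
  refine ⟨⟨hmonic, hdeg', fun i => ?_⟩, fun x => by simp [hpdef, eval_finset_sum]⟩
  rcases lt_trichotomy i n with h | rfl | h
  · rw [hcoeff, if_neg (by omega), zero_add]
    rw [Finset.sum_eq_single (n - i)]
    · rw [if_pos (by omega)]; exact ha _ (by omega) (by omega)
    · intro j hj hne; simp only [Finset.mem_Icc] at hj; rw [if_neg (by omega)]
    · intro hni; simp only [Finset.mem_Icc] at hni; omega
  · rw [hcn, Nat.sub_self, pow_zero, Ideal.one_eq_top]; exact Submodule.mem_top
  · rw [coeff_eq_zero_of_natDegree_lt (by omega)]; exact Submodule.zero_mem _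

theorem pow_mem_of_eq (I : Ideal R) (x : R) (m : ℕ) (b : ℕ → R)
    (hb : ∀ j, 1 ≤ j → j ≤ m → b j ∈ I ^ j)
    (heq : x ^ m + ∑ j ∈ Finset.Icc 1 m, b j * x ^ (m - j) = 0) :
    ∀ k, x ^ (m + k) ∈ I ^ (k + 1) := by
  intro k
  induction k using Nat.strong_induction_on with
  | _ k ih =>
    have hxm : x ^ m = -∑ j ∈ Finset.Icc 1 m, b j * x ^ (m - j) :=
      eq_neg_of_add_eq_zero_left heq
    have hrw : x ^ (m + k) = -∑ j ∈ Finset.Icc 1 m, b j * (x ^ (m - j) * x ^ k) := by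
      rw [pow_add, hxm, neg_mul, Finset.sum_mul]
      congr 1
      refine Finset.sum_congr rfl fun j hj => by ring
    rw [hrw]
    refine neg_mem (Submodule.sum_mem _ fun j hj => ?_)
    simp only [Finset.mem_Icc] at hj
    by_cases hcase : j ≤ k
    · have h2 : x ^ (m - j) * x ^ k = x ^ (m + (k - j)) := by
        rw [← pow_add]; congr 1; omega
      rw [h2]
      have h3 := ih (k - j) (by omega)
      have h4 : b j * x ^ (m + (k - j)) ∈ I ^ j * I ^ (k - j + 1) :=
        Ideal.mul_mem_mul (hb j (by omega) (by omega)) h3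
      rw [← pow_add] at h4
      exact Ideal.pow_le_pow_right (by omega) h4
    · exact Ideal.mul_mem_right _ _ (Ideal.pow_le_pow_right (by omega) (hb j (by omega) (by omega)))

theorem eq_succ_of_eq {I : Ideal R} {x : R} {n : ℕ} {a : ℕ → R}
    (ha : ∀ j, 1 ≤ j → j ≤ n → a j ∈ I ^ j)
    (heq : x ^ n + ∑ j ∈ Finset.Icc 1 n, a j * x ^ (n - j) = 0) :
    ∃ b : ℕ → R, (∀ j, 1 ≤ j → j ≤ n + 1 → b j ∈ I ^ j) ∧
      x ^ (n + 1) + ∑ j ∈ Finset.Icc 1 (n + 1), b j * x ^ (n + 1 - j) = 0 := by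
  refine ⟨fun j => if j ≤ n then a j else 0, fun j hj1 hj2 => ?_, ?_⟩
  · by_cases h : j ≤ n
    · simp only [if_pos h]; exact ha j hj1 h
    · simp only [if_neg h]; exact Submodule.zero_mem _
  · have key : x ^ (n + 1) + ∑ j ∈ Finset.Icc 1 (n + 1),
        (if j ≤ n then a j else 0) * x ^ (n + 1 - j)
        = x * (x ^ n + ∑ j ∈ Finset.Icc 1 n, a j * x ^ (n - j)) := by
      rw [Finset.sum_Icc_succ_top (by omega), if_neg (by omega), zero_mul, add_zero,
        mul_add, Finset.mul_sum, ← pow_succ']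
      congr 1
      refine Finset.sum_congr rfl fun j hj => ?_
      simp only [Finset.mem_Icc] at hj
      rw [if_pos hj.2, show n + 1 - j = (n - j) + 1 by omega, pow_succ]
      ring
    rw [key, heq, mul_zero]

theorem exists_mul_pow_eq_zero_of_mem_minimalPrime {P : Ideal R} {x : R}
    (hP : P ∈ minimalPrimes R) (hx : x ∈ P) :
    ∃ s k, s ∉ P ∧ s * x ^ k = 0 := by
  haveI : P.IsPrime := hP.1.1
  have h1 : ¬ IsUnit (algebraMap R (Localization P.primeCompl) x) := by
    rw [IsLocalization.AtPrime.isUnit_to_map_iff (Localization P.primeCompl) P x]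
    exact fun h => h hx
  have h2 : IsNilpotent (algebraMap R (Localization P.primeCompl) x) :=
    (by haveI := Ring.KrullDimLE.of_isLocalization P hP (Localization P.primeCompl); exact Ring.KrullDimLE.isNilpotent_iff_mem_nonunits : IsNilpotent (algebraMap R (Localization P.primeCompl) x) ↔ _).mpr
      (mem_nonunits_iff.mpr h1)
  obtain ⟨k, hk⟩ := h2
  rw [← map_pow] at hk
  obtain ⟨⟨s, hs⟩, hsk⟩ := (IsLocalization.map_eq_zero_iff P.primeCompl _ _).mp hk
  exact ⟨s, k, hs, hsk⟩

theorem forward_aux [IsNoetherianRing R] (I : Ideal R) (x : R)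
    (h : MemIntegralClosure I x) :
    ∃ c : R, (∀ P ∈ minimalPrimes R, c ∉ P) ∧
      ∃ n₀ : ℕ, ∀ m : ℕ, n₀ ≤ m → c * x ^ m ∈ I ^ m := by
  obtain ⟨n, hn, a, ha, heq⟩ := h
  obtain ⟨b, hb, heqb⟩ := eq_succ_of_eq ha heq
  have KL : ∀ k, x ^ (n + 1 + k) ∈ I ^ (k + 1) := pow_mem_of_eq I x (n + 1) b hb heqb
  -- choose annihilating elements for minimal primes containing x
  have hchoice : ∀ P : Ideal R, ∃ sk : R × ℕ,
      P ∈ minimalPrimes R → x ∈ P → sk.1 ∉ P ∧ sk.1 * x ^ sk.2 = 0 := by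
    intro P
    by_cases hP : P ∈ minimalPrimes R ∧ x ∈ P
    · obtain ⟨s, k, h1, h2⟩ := exists_mul_pow_eq_zero_of_mem_minimalPrime hP.1 hP.2
      exact ⟨(s, k), fun _ _ => ⟨h1, h2⟩⟩
    · exact ⟨(0, 0), fun h1 h2 => absurd ⟨h1, h2⟩ hP⟩
  choose sk hsk using hchoice
  -- choose separating elements for pairs of minimal primes
  have hqc : ∀ P Q : Ideal R, ∃ r : R,
      P ∈ minimalPrimes R → x ∈ P → Q ∈ minimalPrimes R → x ∉ Q → r ∈ Q ∧ r ∉ P := by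
    intro P Q
    by_cases hh : P ∈ minimalPrimes R ∧ x ∈ P ∧ Q ∈ minimalPrimes R ∧ x ∉ Q
    · obtain ⟨h1, h2, h3, h4⟩ := hh
      have hne : ¬Q ≤ P := by
        intro hle
        exact h4 ((h1.2 ⟨h3.1.1, bot_le⟩ hle) h2)
      obtain ⟨r, hr1, hr2⟩ := SetLike.not_le_iff_exists.mp hne
      exact ⟨r, fun _ _ _ _ => ⟨hr1, hr2⟩⟩
    · exact ⟨0, by tauto⟩
  choose q hq using hqc
  have hfin : (minimalPrimes R).Finite := minimalPrimes.finite_of_isNoetherianRing R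
  classical
  set Sfin : Finset (Ideal R) := hfin.toFinset with hSfin
  set S1 : Finset (Ideal R) := Sfin.filter (fun P => x ∈ P) with hS1
  set S2fin : Finset (Ideal R) := Sfin.filter (fun P => x ∉ P) with hS2fin
  set M : ℕ := S1.sup (fun P => (sk P).2) with hM
  set K : Ideal R := LinearMap.ker (LinearMap.mulRight R (x ^ M)) with hK
  have hmemS1 : ∀ P, P ∈ S1 ↔ P ∈ minimalPrimes R ∧ x ∈ P := by
    intro P; simp [hS1, hSfin, Finset.mem_filter, Set.Finite.mem_toFinset]
  have hmemS2 : ∀ P, P ∈ S2fin ↔ P ∈ minimalPrimes R ∧ x ∉ P := by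
    intro P; simp [hS2fin, hSfin, Finset.mem_filter, Set.Finite.mem_toFinset]
  have hsK : ∀ P ∈ S1, (sk P).1 ∈ K := by
    intro P hP
    obtain ⟨h1, h2⟩ := (hmemS1 P).mp hP
    obtain ⟨hs1, hs2⟩ := hsk P h1 h2
    have hle : (sk P).2 ≤ M := Finset.le_sup (f := fun P => (sk P).2) hP
    rw [hK, LinearMap.mem_ker, LinearMap.mulRight_apply]
    calc (sk P).1 * x ^ M = (sk P).1 * x ^ (sk P).2 * x ^ (M - (sk P).2) := by
          rw [mul_assoc, ← pow_add]; congr 2; omega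
      _ = 0 := by rw [hs2, zero_mul]
  set S2 : Set (Ideal R) := {Q | Q ∈ minimalPrimes R ∧ x ∉ Q} with hS2
  set J : Ideal R := K ⊓ sInf S2 with hJ
  have hJP : ∀ P ∈ S1, ¬J ≤ P := by
    intro P hP hle
    obtain ⟨hPmin, hPx⟩ := (hmemS1 P).mp hP
    haveI : P.IsPrime := hPmin.1.1
    set t : R := (sk P).1 * ∏ Q ∈ S2fin, q P Q with ht
    have ht1 : t ∈ K := by
      have h0 := hsK P hP
      rw [hK, LinearMap.mem_ker, LinearMap.mulRight_apply] at h0 ⊢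
      rw [ht, mul_comm ((sk P).1), mul_assoc, h0, mul_zero]
    have ht2 : t ∈ sInf S2 := by
      rw [Submodule.mem_sInf]
      intro Q' hQ'
      have hQfin : Q' ∈ S2fin := (hmemS2 Q').mpr hQ'
      have hqmem : q P Q' ∈ Q' := (hq P Q' hPmin hPx hQ'.1 hQ'.2).1
      rw [ht, ← Finset.prod_erase_mul _ _ hQfin, ← mul_assoc]
      exact Ideal.mul_mem_left _ _ hqmem
    have ht3 : t ∉ P := by
      intro htP
      rcases (Ideal.IsPrime.mul_mem_iff_mem_or_mem ‹P.IsPrime›).mp htP with h' | h'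
      · exact (hsk P hPmin hPx).1 h'
      · obtain ⟨Q, hQ, hqQ⟩ := (Ideal.IsPrime.prod_mem_iff).mp h'
        exact (hq P Q hPmin hPx ((hmemS2 Q).mp hQ).1 ((hmemS2 Q).mp hQ).2).2 hqQ
    exact ht3 (hle (Submodule.mem_inf.mpr ⟨ht1, ht2⟩))
  have havoid : ¬(J : Set R) ⊆ ⋃ P ∈ (↑S1 : Set (Ideal R)), (P : Set R) := by
    rw [Ideal.subset_union_prime (⊥ : Ideal R) ⊥
      (fun P hP _ _ => ((hmemS1 P).mp hP).1.1.1)]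
    rintro ⟨P, hP, hle⟩
    exact hJP P hP hle
  obtain ⟨e, heJ, heP⟩ := Set.not_subset.mp havoid
  have heP' : ∀ P ∈ S1, e ∉ P := by
    intro P hP hmem
    exact heP (Set.mem_biUnion (Finset.mem_coe.mpr hP) hmem)
  refine ⟨x ^ n + e, ?_, M + 1, ?_⟩
  · intro P hPmin hc
    haveI : P.IsPrime := hPmin.1.1
    by_cases hx : x ∈ P
    · have hxn : x ^ n ∈ P := Ideal.pow_mem_of_mem P hx n hn
      have : e ∈ P := by
        have := Submodule.sub_mem P hc hxn
        simpa using this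
      exact heP' P ((hmemS1 P).mpr ⟨hPmin, hx⟩) this
    · have heIn : e ∈ P := by
        have h2 : e ∈ sInf S2 := (Submodule.mem_inf.mp heJ).2
        exact Submodule.mem_sInf.mp h2 P ⟨hPmin, hx⟩
      have hxn : x ^ n ∉ P := fun hmem =>
        hx (‹P.IsPrime›.mem_of_pow_mem n hmem)
      have : x ^ n ∈ P := by
        have := Submodule.sub_mem P hc heIn
        simpa using this
      exact hxn this
  · intro m hm
    have hxe : e * x ^ m = 0 := by
      have h1 : e ∈ K := (Submodule.mem_inf.mp heJ).1
      rw [hK, LinearMap.mem_ker, LinearMap.mulRight_apply] at h1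
      calc e * x ^ m = e * x ^ M * x ^ (m - M) := by
            rw [mul_assoc, ← pow_add]; congr 2; omega
        _ = 0 := by rw [h1, zero_mul]
    have hxp : x ^ n * x ^ m = x ^ (n + 1 + (m - 1)) := by
      rw [← pow_add]; congr 1; omega
    have hpm : x ^ n * x ^ m ∈ I ^ m := by
      rw [hxp]
      have := KL (m - 1)
      rwa [show m - 1 + 1 = m by omega] at this
    rw [add_mul, hxe, add_zero]
    exact hpm

set_option synthInstance.maxHeartbeats 1000000 in
theorem backward_aux [IsNoetherianRing R] (I : Ideal R) (x c : R)
    (hc : ∀ P ∈ minimalPrimes R, c ∉ P) (n₀ : ℕ)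
    (H : ∀ m : ℕ, n₀ ≤ m → c * x ^ m ∈ I ^ m) : MemIntegralClosure I x := by
  classical
  by_cases htriv : Subsingleton R
  · exact ⟨1, one_pos, fun _ => 0, fun j _ _ => Submodule.zero_mem _, Subsingleton.elim _ _⟩
  haveI : Nontrivial R := not_subsingleton_iff_nontrivial.mp htriv
  set A := reesAlgebra I with hA
  have hfmem : ∀ m : ℕ, (monomial (n₀ + m) (c * x ^ (n₀ + m)) : R[X]) ∈ A :=
    fun m => reesAlgebra.monomial_mem.mpr (H _ (Nat.le_add_right _ _))
  set f : ℕ → A := fun m => ⟨monomial (n₀ + m) (c * x ^ (n₀ + m)), hfmem m⟩ with hf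
  set g : ℕ →o Ideal A :=
    ⟨fun k => Ideal.span (f '' Set.Iic k), fun k l hkl =>
      Ideal.span_mono (Set.image_mono (Set.Iic_subset_Iic.mpr hkl))⟩ with hg
  obtain ⟨N, hN⟩ := (monotone_stabilizes_iff_noetherian.mpr inferInstance) g
  have hfN : f (N + 1) ∈ Ideal.span (f '' Set.Iic N) := by
    have h1 : f (N + 1) ∈ g (N + 1) :=
      Ideal.subset_span ⟨N + 1, Set.mem_Iic.mpr le_rfl, rfl⟩
    rwa [← hN (N + 1) (Nat.le_succ N)] at h1
  -- the key invariant, proved by induction on the span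
  have key : ∀ (w : A), w ∈ Ideal.span (f '' Set.Iic N) → ∀ k : ℕ,
      ∃ aa : ℕ → R, (∀ i, aa i ∈ I ^ (k - (n₀ + i))) ∧
        (w : R[X]).coeff k = ∑ i ∈ Finset.Iic N, aa i * (c * x ^ (n₀ + i)) := by
    intro w hw
    induction hw using Submodule.span_induction with
    | mem w hwmem =>
      obtain ⟨i, hiN, rfl⟩ := hwmem
      rw [Set.mem_Iic] at hiN
      intro k
      refine ⟨fun i' => if i' = i ∧ k = n₀ + i then 1 else 0, fun i' => ?_, ?_⟩
      · by_cases hcase : i' = i ∧ k = n₀ + i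
        · simp only [if_pos hcase]
          rw [show k - (n₀ + i') = 0 by omega, pow_zero, Ideal.one_eq_top]
          exact Submodule.mem_top
        · simp only [if_neg hcase]; exact Submodule.zero_mem _
      · show (monomial (n₀ + i) (c * x ^ (n₀ + i)) : R[X]).coeff k = _
        rw [coeff_monomial]
        by_cases hk : n₀ + i = k
        · rw [if_pos hk, Finset.sum_eq_single i]
          · dsimp only; rw [if_pos ⟨rfl, hk.symm⟩, one_mul]
          · intro i' _ hne; dsimp only; rw [if_neg (fun hcc => hne hcc.1), zero_mul]
          · intro habs; exact absurd (Finset.mem_Iic.mpr hiN) habs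
        · rw [if_neg hk, Finset.sum_eq_zero]
          intro i' _
          dsimp only; rw [if_neg (fun hcc => hk hcc.2.symm), zero_mul]
    | zero =>
      intro k
      exact ⟨0, fun i => Submodule.zero_mem _, by simp⟩
    | add w₁ w₂ hw₁ hw₂ ih₁ ih₂ =>
      intro k
      obtain ⟨aa₁, h₁, e₁⟩ := ih₁ k
      obtain ⟨aa₂, h₂, e₂⟩ := ih₂ k
      refine ⟨aa₁ + aa₂, fun i => Submodule.add_mem _ (h₁ i) (h₂ i), ?_⟩
      push_cast
      rw [Polynomial.coeff_add, e₁, e₂, ← Finset.sum_add_distrib]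
      exact Finset.sum_congr rfl fun i _ => by simp [add_mul]
    | smul s w hwmem ih =>
      intro k
      choose aa haa1 haa2 using ih
      refine ⟨fun i => ∑ uv ∈ Finset.HasAntidiagonal.antidiagonal k, (s : R[X]).coeff uv.1 * aa uv.2 i,
        fun i => ?_, ?_⟩
      · refine Submodule.sum_mem _ fun uv huv => ?_
        rw [Finset.HasAntidiagonal.mem_antidiagonal] at huv
        have h1 : (s : R[X]).coeff uv.1 ∈ I ^ uv.1 := s.2 uv.1
        have h2 := haa1 uv.2 i
        have h3 : (s : R[X]).coeff uv.1 * aa uv.2 i ∈ I ^ (uv.1 + (uv.2 - (n₀ + i))) := by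
          rw [pow_add]; exact Ideal.mul_mem_mul h1 h2
        exact Ideal.pow_le_pow_right (by omega) h3
      · have hcoe : ((s • w : ↥A) : R[X]) = (s : R[X]) * (w : R[X]) := rfl
        rw [hcoe]
        calc ((s : R[X]) * (w : R[X])).coeff k
            = ∑ uv ∈ Finset.HasAntidiagonal.antidiagonal k,
              (s : R[X]).coeff uv.1 * (w : R[X]).coeff uv.2 := coeff_mul _ _ _
          _ = ∑ uv ∈ Finset.HasAntidiagonal.antidiagonal k, ∑ i ∈ Finset.Iic N,
              (s : R[X]).coeff uv.1 * (aa uv.2 i * (c * x ^ (n₀ + i))) := by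
              refine Finset.sum_congr rfl fun uv _ => ?_
              rw [haa2 uv.2, Finset.mul_sum]
          _ = ∑ i ∈ Finset.Iic N, ∑ uv ∈ Finset.HasAntidiagonal.antidiagonal k,
              (s : R[X]).coeff uv.1 * (aa uv.2 i * (c * x ^ (n₀ + i))) := Finset.sum_comm
          _ = ∑ i ∈ Finset.Iic N, (∑ uv ∈ Finset.HasAntidiagonal.antidiagonal k,
              (s : R[X]).coeff uv.1 * aa uv.2 i) * (c * x ^ (n₀ + i)) := by
              refine Finset.sum_congr rfl fun i _ => ?_
              rw [Finset.sum_mul]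
              exact Finset.sum_congr rfl fun uv _ => by ring
  -- apply the invariant
  set n : ℕ := n₀ + N + 1 with hn
  obtain ⟨aa, haa1, haa2⟩ := key (f (N + 1)) hfN n
  have hlhs : ((f (N + 1) : A) : R[X]).coeff n = c * x ^ n := by
    show (monomial (n₀ + (N + 1)) (c * x ^ (n₀ + (N + 1))) : R[X]).coeff n = _
    rw [coeff_monomial, if_pos (by omega : n₀ + (N + 1) = n)]
    congr 1
  rw [hlhs] at haa2
  -- build the coefficients of the integral equation
  set a : ℕ → R := fun j => if 1 ≤ j ∧ j ≤ N + 1 then -(aa (N + 1 - j)) else 0 with ha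
  have hamem : ∀ j, 1 ≤ j → j ≤ n → a j ∈ I ^ j := by
    intro j hj1 hj2
    by_cases hcase : 1 ≤ j ∧ j ≤ N + 1
    · simp only [ha, if_pos hcase]
      refine neg_mem ?_
      have := haa1 (N + 1 - j)
      rwa [show n - (n₀ + (N + 1 - j)) = j by omega] at this
    · simp only [ha, if_neg hcase]; exact Submodule.zero_mem _
  set y : R := x ^ n + ∑ j ∈ Finset.Icc 1 n, a j * x ^ (n - j) with hy
  have hcy : c * y = 0 := by
    have hsum : ∑ j ∈ Finset.Icc 1 n, a j * (c * x ^ (n - j))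
        = -∑ i ∈ Finset.Iic N, aa i * (c * x ^ (n₀ + i)) := by
      rw [← Finset.sum_subset (Finset.Icc_subset_Icc_right (by omega : N + 1 ≤ n))
        (fun j hj hj' => ?_)]
      · rw [← Finset.sum_neg_distrib]
        refine Finset.sum_nbij' (fun j => N + 1 - j) (fun i => N + 1 - i) ?_ ?_ ?_ ?_ ?_
        · intro j hj; simp only [Finset.mem_Icc] at hj; simp only [Finset.mem_Iic]; omega
        · intro i hi; simp only [Finset.mem_Iic] at hi; simp only [Finset.mem_Icc]; omega
        · intro j hj; simp only [Finset.mem_Icc] at hj; omega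
        · intro i hi; simp only [Finset.mem_Iic] at hi; omega
        · intro j hj
          simp only [Finset.mem_Icc] at hj
          show a j * (c * x ^ (n - j)) = _
          rw [ha]; dsimp only
          rw [if_pos (⟨hj.1, hj.2⟩ : 1 ≤ j ∧ j ≤ N + 1),
            show n - j = n₀ + (N + 1 - j) by omega]
          ring
      · simp only [Finset.mem_Icc] at hj
        show a j * (c * x ^ (n - j)) = 0
        rw [ha]; dsimp only
        rw [if_neg (fun hcc => hj' (Finset.mem_Icc.mpr hcc)), zero_mul]
    rw [hy, mul_add, Finset.mul_sum]
    rw [Finset.sum_congr rfl (fun j _ => by ring :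
      ∀ j ∈ Finset.Icc 1 n, c * (a j * x ^ (n - j)) = a j * (c * x ^ (n - j)))]
    rw [hsum, ← haa2]
    ring
  -- y is in every minimal prime, hence nilpotent
  have hynil : IsNilpotent y := by
    rw [← mem_nilradical, nilradical_eq_sInf]
    rw [Submodule.mem_sInf]
    intro Jp hJp
    haveI : Ideal.IsPrime Jp := hJp
    obtain ⟨P, hPmin, hPle⟩ := Ideal.exists_minimalPrimes_le (bot_le : ⊥ ≤ Jp)
    haveI : P.IsPrime := hPmin.1.1
    have h0 : c * y ∈ P := by rw [hcy]; exact Submodule.zero_mem _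
    rcases (Ideal.IsPrime.mul_mem_iff_mem_or_mem ‹P.IsPrime›).mp h0 with h' | h'
    · exact absurd h' (hc P hPmin)
    · exact hPle h'
  obtain ⟨k, hk⟩ := hynil
  have hkpos : 0 < k := by
    rcases Nat.eq_zero_or_pos k with rfl | h
    · rw [pow_zero] at hk; exact absurd hk one_ne_zero
    · exact h
  -- conclude via polynomials
  obtain ⟨hgood, heval⟩ := goodPoly_of_data (I := I) (by omega : 0 < n) a hamem
  have hevalx : (X ^ n + ∑ j ∈ Finset.Icc 1 n, C (a j) * X ^ (n - j)).eval x = y :=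
    (heval x).trans hy.symm
  have hpk := hgood.pow k
  refine hpk.memIntegralClosure (Nat.mul_pos (by omega) hkpos) ?_
  rw [eval_pow, hevalx, hk]

end IntegralClosureAux

/-- Let `R` be a commutative Noetherian ring, `I` an ideal and `x ∈ R`.  Then `x` lies in the
integral closure of `I` if and only if there exist `c ∈ R⁰` and an integer `n₀` such that
`c * x ^ n ∈ I ^ n` for all `n ≥ n₀`. -/
theorem integralClosure_iff_exists_mul_pow_mem {R : Type*} [CommRing R] [IsNoetherianRing R]
    (I : Ideal R) (x : R) :
    MemIntegralClosure I x ↔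
      ∃ c : R, MemRzero c ∧ ∃ n₀ : ℕ, ∀ n : ℕ, n₀ ≤ n → c * x ^ n ∈ I ^ n := by
  constructor
  · intro h
    obtain ⟨c, hc, n₀, h2⟩ := IntegralClosureAux.forward_aux I x h
    exact ⟨c, hc, n₀, h2⟩
  · rintro ⟨c, hc, n₀, H⟩
    exact IntegralClosureAux.backward_aux I x c hc n₀ H
end

section
/- Let (R,m) be a Noetherian local ring of prime characteristic p, let I ⊆ R be an ideal of height g > 0, and let a_1, …, a_ℓ ∈ I (with ℓ ≥ g) be such that J = (a_1, …, a_ℓ) is a reduction of I. Let w ≥ 0 and M ≥ 0 be integers, set J_i = (a_1, …, a_i), and suppose t_1 = ⋯ = t_g = 0 and t_{g+1}, …, t_ℓ ∈ R satisfy t_j I^{M+k} ⊆ J_{j-1}^k I^M for all g+1 ≤ j ≤ ℓ and all 0 ≤ k ≤ w + ℓ. Set b_i = a_i + t_i and 𝔄 = (b_1, …, b_ℓ). Then the integral closure of I^{ℓ+w} is contained in the tight closure (𝔄^{w+1})*. -/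
open Ideal IsLocalRing

/-- The `q`-th bracket power `I^{[q]}` of an ideal: the ideal generated by the
`q`-th powers of all elements of `I`. -/
def bracketPow {R : Type*} [CommRing R] (I : Ideal R) (q : ℕ) : Ideal R :=
  Ideal.span ((fun x => x ^ q) '' (I : Set R))

/-- Membership in the tight closure `I*` of `I` in a ring of characteristic `p`. -/
def MemTightClosure {R : Type*} [CommRing R] (p : ℕ) (I : Ideal R) (x : R) : Prop :=
  ∃ c : R, MemRzero c ∧ ∃ e₀ : ℕ, ∀ e : ℕ, e₀ ≤ e → c * x ^ p ^ e ∈ bracketPow I (p ^ e)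

/-- The height of an ideal: the infimum of the heights of the primes containing it
(`⊤` for the unit ideal). -/
noncomputable def idealHeight {R : Type*} [CommRing R] (I : Ideal R) : ℕ∞ :=
  ⨅ (P : PrimeSpectrum R) (_ : I ≤ P.asIdeal), Order.height P

/-- `J` is a reduction of `I` if `J ⊆ I` and `J * I ^ n = I ^ (n + 1)` for some `n ≥ 0`. -/
def IsReduction {R : Type*} [CommRing R] (J I : Ideal R) : Prop :=
  J ≤ I ∧ ∃ n : ℕ, J * I ^ n = I ^ (n + 1)

/-- The ideal generated by the first `i` entries of the family `a`. -/
def partialSpan {R : Type*} [CommRing R] {ℓ : ℕ} (a : Fin ℓ → R) (i : ℕ) : Ideal R :=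
  Ideal.span (a '' {j : Fin ℓ | (j : ℕ) < i})

section Aux

variable {R : Type*} [CommRing R]

lemma ideal_sum_le {ι : Type*} [DecidableEq ι] (s : Finset ι) (h : ι → Ideal R) (Q : Ideal R)
    (hs : ∀ i ∈ s, h i ≤ Q) : (∑ i ∈ s, h i) ≤ Q := by
  induction s using Finset.induction_on with
  | empty => simp
  | insert _ _ hni ih =>
    rename_i i s'
    rw [Finset.sum_insert hni, Submodule.add_eq_sup]
    exact sup_le (hs _ (Finset.mem_insert_self _ _))
      (ih fun j hj => hs _ (Finset.mem_insert_of_mem hj))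

lemma ideal_le_sum {ι : Type*} [DecidableEq ι] (s : Finset ι) (h : ι → Ideal R) {i : ι}
    (hi : i ∈ s) : h i ≤ ∑ j ∈ s, h j := by
  rw [← Finset.sum_erase_add s h hi, Submodule.add_eq_sup]
  exact le_sup_right

lemma partialSpan_zero {ℓ : ℕ} (a : Fin ℓ → R) : partialSpan a 0 = ⊥ := by
  have h : {j : Fin ℓ | (j : ℕ) < 0} = ∅ := by ext j; simp
  unfold partialSpan
  rw [h]
  simp

lemma partialSpan_succ {ℓ : ℕ} (a : Fin ℓ → R) {m : ℕ} (hm : m < ℓ) :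
    partialSpan a (m + 1) = partialSpan a m ⊔ Ideal.span {a ⟨m, hm⟩} := by
  have h : {j : Fin ℓ | (j : ℕ) < m + 1} = {j : Fin ℓ | (j : ℕ) < m} ∪ {⟨m, hm⟩} := by
    ext j
    simp only [Set.mem_setOf_eq, Set.mem_union, Set.mem_singleton_iff, Fin.ext_iff]
    omega
  unfold partialSpan
  rw [h, Set.image_union, Set.image_singleton, Ideal.span_union]

lemma partialSpan_le {ℓ : ℕ} (a : Fin ℓ → R) {I : Ideal R} (haI : ∀ i, a i ∈ I) (m : ℕ) :
    partialSpan a m ≤ I := by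
  unfold partialSpan
  rw [Ideal.span_le]
  rintro x ⟨j, -, rfl⟩
  exact haI j

lemma partialSpan_top {ℓ : ℕ} (a : Fin ℓ → R) : partialSpan a ℓ = Ideal.span (Set.range a) := by
  have h : {j : Fin ℓ | (j : ℕ) < ℓ} = Set.univ := by ext j; simp [j.isLt]
  unfold partialSpan
  rw [h, Set.image_univ]

lemma bracketPow_mem {I : Ideal R} {u : R} (hu : u ∈ I) (q : ℕ) : u ^ q ∈ bracketPow I q :=
  Ideal.subset_span ⟨u, hu, rfl⟩

lemma split_lemma {ℓ : ℕ} (a : Fin ℓ → R) {m : ℕ} (hm : m < ℓ) (D : ℕ) :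
    partialSpan a (m + 1) ^ D ≤ Ideal.span
      {y | ∃ e₁ e₂, e₁ + e₂ = D ∧ ∃ x' ∈ partialSpan a m ^ e₂, y = a ⟨m, hm⟩ ^ e₁ * x'} := by
  induction D with
  | zero =>
    have h1 : (1 : R) ∈ Ideal.span
        {y | ∃ e₁ e₂, e₁ + e₂ = 0 ∧ ∃ x' ∈ partialSpan a m ^ e₂, y = a ⟨m, hm⟩ ^ e₁ * x'} := by
      apply Ideal.subset_span
      exact ⟨0, 0, rfl, 1, by simp, by simp⟩
    rw [pow_zero]
    intro x hx
    have : x = x * 1 := by ring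
    rw [this]
    exact Ideal.mul_mem_left _ _ h1
  | succ D ih =>
    rw [pow_succ]
    apply Ideal.mul_le.mpr
    intro x hx r hr
    refine Submodule.span_induction ?_ ?_ ?_ ?_ (ih hx)
    · rintro y ⟨e₁, e₂, hee, x', hx', rfl⟩
      rw [partialSpan_succ a hm, Submodule.mem_sup] at hr
      obtain ⟨r₁, hr₁, r₂, hr₂, rfl⟩ := hr
      rw [Ideal.mem_span_singleton] at hr₂
      obtain ⟨s, rfl⟩ := hr₂
      have h1 : a ⟨m, hm⟩ ^ e₁ * x' * (r₁ + a ⟨m, hm⟩ * s)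
          = a ⟨m, hm⟩ ^ e₁ * (x' * r₁) + a ⟨m, hm⟩ ^ (e₁ + 1) * (s * x') := by ring
      rw [h1]
      apply Ideal.add_mem
      · apply Ideal.subset_span
        exact ⟨e₁, e₂ + 1, by omega, x' * r₁,
          by rw [pow_succ]; exact Ideal.mul_mem_mul hx' hr₁, rfl⟩
      · apply Ideal.subset_span
        exact ⟨e₁ + 1, e₂, by omega, s * x',
          Ideal.mul_mem_left _ _ hx', rfl⟩
    · simp
    · intro y₁ y₂ _ _ h₁ h₂
      have : (y₁ + y₂) * r = y₁ * r + y₂ * r := by ring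
      rw [this]; exact Ideal.add_mem _ h₁ h₂
    · intro c y _ h
      rw [smul_mul_assoc]
      exact Submodule.smul_mem _ _ h

end Aux

section Part2

variable {R : Type*} [CommRing R]

lemma tele_lemma (p : ℕ) (hp : p.Prime) [CharP R p] (e : ℕ) (a' t' : R) (f : ℕ) :
    a' ^ (p ^ e * f) = (a' + t') ^ (p ^ e * f)
      - t' ^ p ^ e * ∑ j ∈ Finset.range f, (a' + t') ^ (p ^ e * j) * a' ^ (p ^ e * (f - 1 - j)) := by
  haveI := Fact.mk hp
  have hX : (a' + t') ^ p ^ e = a' ^ p ^ e + t' ^ p ^ e := add_pow_char_pow a' t' p e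
  have geom := geom_sum₂_mul ((a' + t') ^ p ^ e) (a' ^ p ^ e) f
  simp only [pow_mul]
  linear_combination geom -
    (∑ i ∈ Finset.range f, ((a' + t') ^ p ^ e) ^ i * (a' ^ p ^ e) ^ (f - 1 - i)) * hX

lemma conv_lemma {ℓ : ℕ} (a t : Fin ℓ → R) (I : Ideal R) (haI : ∀ i, a i ∈ I) (w M g : ℕ)
    (htcol : ∀ j : Fin ℓ, g ≤ (j : ℕ) → ∀ k : ℕ, k ≤ w + ℓ → ∀ x ∈ I ^ (M + k),
      t j * x ∈ (partialSpan a (j : ℕ)) ^ k * I ^ M)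
    {m : ℕ} (hm : m < ℓ) (hgm : g ≤ m) :
    ∀ (s c : ℕ), c ≤ s * (w + ℓ) → ∀ v ∈ I ^ M,
      t ⟨m, hm⟩ ^ s * (a ⟨m, hm⟩ ^ c * v) ∈ partialSpan a m ^ c * I ^ M := by
  intro s
  induction s with
  | zero =>
    intro c hc v hv
    have hc0 : c = 0 := by omega
    subst hc0
    simpa using hv
  | succ s ih =>
    intro c hc v hv
    set k := min c (w + ℓ) with hk
    have hkwl : k ≤ w + ℓ := min_le_right _ _
    have hkc : k ≤ c := min_le_left _ _
    have hx : a ⟨m, hm⟩ ^ k * v ∈ I ^ (M + k) := by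
      rw [Nat.add_comm, pow_add]
      exact Ideal.mul_mem_mul (Ideal.pow_mem_pow (haI _) k) hv
    have ht := htcol ⟨m, hm⟩ hgm k hkwl _ hx
    have heq : t ⟨m, hm⟩ ^ (s + 1) * (a ⟨m, hm⟩ ^ c * v)
        = t ⟨m, hm⟩ ^ s * (a ⟨m, hm⟩ ^ (c - k) * (t ⟨m, hm⟩ * (a ⟨m, hm⟩ ^ k * v))) := by
      have h1 : c = (c - k) + k := by omega
      rw [h1, pow_add]
      ring_nf
      rw [Nat.sub_add_cancel hkc]
      ring
    rw [heq]
    have hclaim : ∀ y ∈ partialSpan a m ^ k * I ^ M,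
        t ⟨m, hm⟩ ^ s * (a ⟨m, hm⟩ ^ (c - k) * y) ∈ partialSpan a m ^ c * I ^ M := by
      intro y hy
      refine Submodule.mul_induction_on hy ?_ ?_
      · intro y₁ hy₁ v₁ hv₁
        have hmul : (s + 1) * (w + ℓ) = s * (w + ℓ) + (w + ℓ) := by ring
        have hih := ih (c - k) (by omega) v₁ hv₁
        have heq2 : t ⟨m, hm⟩ ^ s * (a ⟨m, hm⟩ ^ (c - k) * (y₁ * v₁))
            = y₁ * (t ⟨m, hm⟩ ^ s * (a ⟨m, hm⟩ ^ (c - k) * v₁)) := by ring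
        rw [heq2]
        have hck : k + (c - k) = c := by omega
        have hle : partialSpan a m ^ k * (partialSpan a m ^ (c - k) * I ^ M)
            ≤ partialSpan a m ^ c * I ^ M := by
          rw [← mul_assoc, ← pow_add, hck]
        exact hle (Ideal.mul_mem_mul hy₁ hih)
      · intro y₁ y₂ h₁ h₂
        have : t ⟨m, hm⟩ ^ s * (a ⟨m, hm⟩ ^ (c - k) * (y₁ + y₂))
            = t ⟨m, hm⟩ ^ s * (a ⟨m, hm⟩ ^ (c - k) * y₁)
              + t ⟨m, hm⟩ ^ s * (a ⟨m, hm⟩ ^ (c - k) * y₂) := by ring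
        rw [this]
        exact Ideal.add_mem _ h₁ h₂
    exact hclaim _ (by exact_mod_cast ht)

end Part2

section Part3

variable {R : Type*} [CommRing R]

lemma main_lemma {ℓ : ℕ} (p : ℕ) (hp : p.Prime) [CharP R p]
    (a t : Fin ℓ → R) (I : Ideal R) (haI : ∀ i, a i ∈ I) (w M g : ℕ)
    (ht0 : ∀ i : Fin ℓ, (i : ℕ) < g → t i = 0)
    (htcol : ∀ j : Fin ℓ, g ≤ (j : ℕ) → ∀ k : ℕ, k ≤ w + ℓ → ∀ x ∈ I ^ (M + k),
      t j * x ∈ (partialSpan a (j : ℕ)) ^ k * I ^ M)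
    (e : ℕ) :
    ∀ m, m ≤ ℓ → ∀ β D, p ^ e * (w + m) + 1 ≤ D + p ^ e * β →
      ∀ u ∈ (Ideal.span (Set.range fun i => a i + t i)) ^ β,
      ∀ x ∈ partialSpan a m ^ D, ∀ v ∈ I ^ M,
      u ^ p ^ e * x * v ∈ bracketPow ((Ideal.span (Set.range fun i => a i + t i)) ^ (w + 1)) (p ^ e) := by
  set q := p ^ e with hqdef
  have hq1 : 1 ≤ q := Nat.one_le_iff_ne_zero.mpr (pow_ne_zero e hp.ne_zero)
  set 𝔄 := Ideal.span (Set.range fun i => a i + t i) with h𝔄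
  set G := bracketPow (𝔄 ^ (w + 1)) q with hG
  have hdirect : ∀ β', w + 1 ≤ β' → ∀ u ∈ 𝔄 ^ β', ∀ y y' : R, u ^ q * y * y' ∈ G := by
    intro β' hβ' u hu y y'
    have hu1 : u ∈ 𝔄 ^ (w + 1) := Ideal.pow_le_pow_right hβ' hu
    have : u ^ q * y * y' = (y * y') * u ^ q := by ring
    rw [this]
    exact Ideal.mul_mem_left _ _ (bracketPow_mem hu1 q)
  intro m
  induction m with
  | zero =>
    intro _ β D hreq u hu x hx v hv
    by_cases hβ : w + 1 ≤ β
    · exact hdirect β hβ u hu _ _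
    · have hqβ : q * β ≤ q * w := Nat.mul_le_mul_left _ (by omega)
      have hz : q * (w + 0) = q * w := by ring
      have hD : 1 ≤ D := by omega
      rw [partialSpan_zero] at hx
      have hx0 : x = 0 := by
        have hbot : (⊥ : Ideal R) ^ D = ⊥ := by
          rw [← Ideal.zero_eq_bot]
          exact zero_pow (by omega)
        rw [hbot] at hx
        simpa using hx
      rw [hx0]
      simp only [mul_zero, zero_mul]
      exact zero_mem _
  | succ m ihm =>
    intro hmℓ β D hreq u hu x hx v hv
    by_cases hβ : w + 1 ≤ β
    · exact hdirect β hβ u hu _ _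
    have hβ' : β ≤ w := by omega
    have hm : m < ℓ := by omega
    have hmle : m ≤ ℓ := by omega
    have hqβw : q * β ≤ q * (w + (m + 1)) := Nat.mul_le_mul_left _ (by omega)
    have hq1' : q * (w + (m + 1)) = q * (w + m) + q := by ring
    set D₁ := q * (w + (m + 1)) + 1 - q * β with hD₁def
    have hD₁ : D₁ + q * β = q * (w + (m + 1)) + 1 := by omega
    have hD₁D : D₁ ≤ D := by omega
    have hx₁ : x ∈ partialSpan a (m + 1) ^ D₁ := Ideal.pow_le_pow_right hD₁D hx
    have hx₂ := split_lemma a hm D₁ hx₁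
    refine Submodule.span_induction ?_ ?_ ?_ ?_ hx₂
    · rintro y ⟨e₁, e₂, hee, x', hx', rfl⟩
      set am := a ⟨m, hm⟩ with ham
      set tm := t ⟨m, hm⟩ with htm
      set bm := am + tm with hbm
      have hbm𝔄 : bm ∈ 𝔄 := Ideal.subset_span ⟨⟨m, hm⟩, rfl⟩
      rcases Nat.lt_or_ge e₁ q with hlt | hge
      · -- small exponent: pass a_m ^ e₁ as junk
        have heq : u ^ q * (am ^ e₁ * x') * v = am ^ e₁ * (u ^ q * x' * v) := by ring
        rw [heq]
        apply Ideal.mul_mem_left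
        exact ihm hmle β e₂ (by omega) u hu x' hx' v hv
      · obtain ⟨f, r, hrq, hqfr⟩ : ∃ f r, r < q ∧ q * f + r = e₁ :=
          ⟨e₁ / q, e₁ % q, Nat.mod_lt _ (by omega), Nat.div_add_mod e₁ q⟩
        have hf1 : 1 ≤ f := by
          rcases Nat.eq_zero_or_pos f with h0 | h1
          · subst h0; simp at hqfr; omega
          · exact h1
        have htele := tele_lemma p hp e am tm f
        have hexp : am ^ e₁ = am ^ (q * f) * am ^ r := by rw [← pow_add, hqfr]
        have hsplit : u ^ q * (am ^ e₁ * x') * v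
            = u ^ q * (bm ^ (q * f) * am ^ r * x') * v
              - ∑ j ∈ Finset.range f,
                  (bm ^ (q * j) * am ^ (q * (f - 1 - j))) * (tm ^ q * am ^ r * x' * u ^ q * v) := by
          rw [hexp, htele, ← Finset.sum_mul]
          ring
        rw [hsplit]
        apply sub_mem
        · -- good term
          have hgood : u ^ q * (bm ^ (q * f) * am ^ r * x') * v
              = am ^ r * ((u * bm ^ f) ^ q * x' * v) := by
            rw [mul_pow, ← pow_mul]
            ring
          rw [hgood]
          apply Ideal.mul_mem_left
          have hub : u * bm ^ f ∈ 𝔄 ^ (β + f) := by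
            rw [pow_add]
            exact Ideal.mul_mem_mul hu (Ideal.pow_mem_pow hbm𝔄 f)
          have h1 : q * (β + f) = q * β + q * f := by ring
          exact ihm hmle (β + f) e₂ (by omega) _ hub x' hx' v hv
        · -- bad terms
          apply Ideal.sum_mem
          intro j hj
          have hjf : j < f := Finset.mem_range.mp hj
          by_cases hgm : g ≤ m
          · have hj1 : q * (f - 1 - j) + q * j + q = q * f := by
              have hfj : (f - 1 - j) + j + 1 = f := by omega
              calc q * (f - 1 - j) + q * j + q = q * ((f - 1 - j) + j + 1) := by ring
                _ = q * f := by rw [hfj]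
            have h2 : q * (w + (m + 1)) ≤ q * (w + ℓ) := Nat.mul_le_mul_left _ (by omega)
            have hcap : q * (f - 1 - j) + r ≤ q * (w + ℓ) := by omega
            have hconv := conv_lemma a t I haI w M g htcol hm hgm q
              (q * (f - 1 - j) + r) hcap v hv
            have hre : (bm ^ (q * j) * am ^ (q * (f - 1 - j))) * (tm ^ q * am ^ r * x' * u ^ q * v)
                = (u * bm ^ j) ^ q * x' * (tm ^ q * (am ^ (q * (f - 1 - j) + r) * v)) := by
              rw [mul_pow, ← pow_mul, pow_add]
              ring
            rw [hre]
            have hub : u * bm ^ j ∈ 𝔄 ^ (β + j) := by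
              rw [pow_add]
              exact Ideal.mul_mem_mul hu (Ideal.pow_mem_pow hbm𝔄 j)
            refine Submodule.mul_induction_on hconv ?_ ?_
            · intro y₁ hy₁ v₁ hv₁
              have hxy : x' * y₁ ∈ partialSpan a m ^ (e₂ + (q * (f - 1 - j) + r)) := by
                rw [pow_add]
                exact Ideal.mul_mem_mul hx' hy₁
              have harr : (u * bm ^ j) ^ q * x' * (y₁ * v₁)
                  = (u * bm ^ j) ^ q * (x' * y₁) * v₁ := by ring
              rw [harr]
              have h4 : q * (β + j) = q * β + q * j := by ring
              exact ihm hmle (β + j) (e₂ + (q * (f - 1 - j) + r)) (by omega) _ hub _ hxy v₁ hv₁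
            · intro Y₁ Y₂ h₁ h₂
              have : (u * bm ^ j) ^ q * x' * (Y₁ + Y₂)
                  = (u * bm ^ j) ^ q * x' * Y₁ + (u * bm ^ j) ^ q * x' * Y₂ := by ring
              rw [this]
              exact add_mem h₁ h₂
          · -- low index: t_m = 0
            have ht0' : tm = 0 := ht0 ⟨m, hm⟩ (by simpa using Nat.lt_of_not_le hgm)
            rw [ht0', zero_pow (by omega : q ≠ 0)]
            simp only [zero_mul, mul_zero]
            exact zero_mem _
    · simp only [mul_zero, zero_mul]
      exact zero_mem _
    · intro y₁ y₂ _ _ h₁ h₂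
      have : u ^ q * (y₁ + y₂) * v = u ^ q * y₁ * v + u ^ q * y₂ * v := by ring
      rw [this]
      exact add_mem h₁ h₂
    · intro cc y _ h
      have : u ^ q * (cc • y) * v = cc • (u ^ q * y * v) := by
        simp only [smul_eq_mul]
        ring
      rw [this]
      exact Submodule.smul_mem _ _ h

end Part3

/-- Theorem 3.3: let `(R, 𝔪)` be a Noetherian local ring of characteristic `p`, `I` an ideal
of height `g > 0`, and `a_1, …, a_ℓ ∈ I` (with `ℓ ≥ g`) such that `J = (a_1, …, a_ℓ)` is a
reduction of `I`.  Suppose `t_1 = ⋯ = t_g = 0` and `t_{g+1}, …, t_ℓ` satisfy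
`t_j I^{M+k} ⊆ J_{j-1}^k I^M` for all `g + 1 ≤ j ≤ ℓ` and `0 ≤ k ≤ w + ℓ`, where
`J_i = (a_1, …, a_i)`.  Set `b_i = a_i + t_i` and `𝔄 = (b_1, …, b_ℓ)`.  Then
`closure(I^{ℓ+w}) ⊆ (𝔄^{w+1})*`.  (Indices: `i : Fin ℓ` stands for the subscript `i + 1`.) -/
theorem integralClosure_pow_subset_tightClosure {R : Type*} [CommRing R] [IsNoetherianRing R]
    [IsLocalRing R] (p : ℕ) (hp : p.Prime) [CharP R p]
    (I : Ideal R) (g : ℕ) (hg : 0 < g) (hht : idealHeight I = (g : ℕ∞))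
    (ℓ : ℕ) (hgℓ : g ≤ ℓ) (a : Fin ℓ → R) (haI : ∀ i, a i ∈ I)
    (hred : IsReduction (Ideal.span (Set.range a)) I)
    (w M : ℕ) (t : Fin ℓ → R)
    (ht0 : ∀ i : Fin ℓ, (i : ℕ) < g → t i = 0)
    (htcol : ∀ j : Fin ℓ, g ≤ (j : ℕ) → ∀ k : ℕ, k ≤ w + ℓ →
      ∀ x ∈ I ^ (M + k), t j * x ∈ (partialSpan a (j : ℕ)) ^ k * I ^ M) :
    ∀ z : R, MemIntegralClosure (I ^ (ℓ + w)) z →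
      MemTightClosure p (Ideal.span (Set.range fun i => a i + t i) ^ (w + 1)) z := by
  classical
  intro z hz
  obtain ⟨n, hn, co, hco, heqz⟩ := hz
  obtain ⟨hJI, n₀, hJn⟩ := hred
  set J := Ideal.span (Set.range a) with hJ
  set K := I ^ (ℓ + w) with hK
  set 𝔄 := Ideal.span (Set.range fun i => a i + t i) with h𝔄
  set W := ∑ j ∈ Finset.range n, K ^ (n - 1 - j) * Ideal.span {z ^ j} with hW
  -- The basic consequence of integral dependence
  have hsummand : ∀ j, j < n → K ^ (n - 1 - j) * Ideal.span {z ^ j} ≤ W := by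
    intro j hj
    rw [hW]
    exact ideal_le_sum (Finset.range n) (fun i => K ^ (n - 1 - i) * Ideal.span {z ^ i})
      (Finset.mem_range.mpr hj)
  have hbase : z ^ n ∈ K * W := by
    have hzn : z ^ n = -(∑ j ∈ Finset.Icc 1 n, co j * z ^ (n - j)) :=
      eq_neg_of_add_eq_zero_left heqz
    rw [hzn]
    apply neg_mem
    apply Ideal.sum_mem
    intro j hj
    rw [Finset.mem_Icc] at hj
    have h5 : co j ∈ K ^ j := hco j hj.1 hj.2
    have hmem : co j * z ^ (n - j) ∈ K ^ j * Ideal.span {z ^ (n - j)} :=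
      Ideal.mul_mem_mul h5 (Ideal.subset_span (Set.mem_singleton _))
    have hle : K ^ j * Ideal.span {z ^ (n - j)} ≤ K * W := by
      have hKj : K ^ j = K * K ^ (j - 1) := by
        conv_lhs => rw [show j = 1 + (j - 1) by omega]
        rw [pow_add, pow_one]
      rw [hKj, mul_assoc]
      apply Ideal.mul_mono_right
      have hsum := hsummand (n - j) (by omega)
      have hexp : n - 1 - (n - j) = j - 1 := by omega
      rwa [hexp] at hsum
    exact hle hmem
  have hzW : Ideal.span {z} * W ≤ K * W := by
    rw [hW, Finset.mul_sum]
    apply ideal_sum_le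
    intro j hj
    rw [Finset.mem_range] at hj
    have h6 : Ideal.span {z} * (K ^ (n - 1 - j) * Ideal.span {z ^ j})
        = K ^ (n - 1 - j) * Ideal.span {z ^ (j + 1)} := by
      rw [mul_left_comm, Ideal.span_singleton_mul_span_singleton, ← pow_succ']
    rw [h6]
    rcases Nat.lt_or_ge (j + 1) n with hlt | hge
    · have hKe : K ^ (n - 1 - j) = K * K ^ (n - 1 - (j + 1)) := by
        conv_lhs => rw [show n - 1 - j = 1 + (n - 1 - (j + 1)) by omega]
        rw [pow_add, pow_one]
      rw [hKe, mul_assoc]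
      exact Ideal.mul_mono_right (hsummand (j + 1) hlt)
    · have hjn : j + 1 = n := by omega
      have hKe : n - 1 - j = 0 := by omega
      rw [hKe, pow_zero, one_mul, hjn]
      rw [Ideal.span_le]
      intro y hy
      rw [Set.mem_singleton_iff] at hy
      subst hy
      exact hbase
  have hzmW : ∀ m : ℕ, Ideal.span {z ^ m} * W ≤ K ^ m * W := by
    intro m
    induction m with
    | zero => simp
    | succ m ih =>
      have h7 : Ideal.span {z ^ (m + 1)} = Ideal.span {z ^ m} * Ideal.span {z} := by
        rw [Ideal.span_singleton_mul_span_singleton, ← pow_succ]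
      rw [h7, mul_assoc]
      calc Ideal.span {z ^ m} * (Ideal.span {z} * W)
          ≤ Ideal.span {z ^ m} * (K * W) := Ideal.mul_mono_right hzW
        _ = K * (Ideal.span {z ^ m} * W) := by rw [mul_left_comm]
        _ ≤ K * (K ^ m * W) := Ideal.mul_mono_right ih
        _ = K ^ (m + 1) * W := by rw [← mul_assoc, ← pow_succ']
  -- minimal primes
  have hIP : ∀ P ∈ minimalPrimes R, ¬ I ≤ P := by
    intro P hP hle
    have hPp : P.IsPrime := hP.1.1
    have hmin : IsMin (⟨P, hPp⟩ : PrimeSpectrum R) := by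
      intro Q hQ
      exact hP.2 ⟨Q.2, bot_le⟩ hQ
    have h0 : Order.height (⟨P, hPp⟩ : PrimeSpectrum R) = 0 := Order.height_eq_zero.mpr hmin
    have hle2 : idealHeight I ≤ 0 := by
      rw [← h0]
      exact iInf₂_le (⟨P, hPp⟩ : PrimeSpectrum R) hle
    rw [hht] at hle2
    have hg0 : (g : ℕ∞) = 0 := le_antisymm hle2 (zero_le)
    rw [Nat.cast_eq_zero] at hg0
    omega
  have havoid : ∀ Q : Ideal R, (∀ P ∈ minimalPrimes R, ¬ Q ≤ P) →
      ∃ x, x ∈ Q ∧ ∀ P ∈ minimalPrimes R, x ∉ P := by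
    intro Q hQ
    have hfin : (minimalPrimes R).Finite := minimalPrimes.finite_of_isNoetherianRing R
    by_contra hcon
    push_neg at hcon
    have hsub : (Q : Set R) ⊆ ⋃ P ∈ (hfin.toFinset : Set (Ideal R)), ((fun P : Ideal R => P) P : Set R) := by
      intro x hx
      obtain ⟨P, hP, hxP⟩ := hcon x hx
      have hPmem : P ∈ (hfin.toFinset : Set (Ideal R)) := by
        simp only [Finset.coe_sort_coe, Set.Finite.mem_toFinset, Finset.mem_coe]
        exact hP
      exact Set.mem_biUnion hPmem hxP
    obtain ⟨P, hPmem, hQP⟩ := (Ideal.subset_union_prime ⊥ ⊥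
      (fun P hP _ _ => (hfin.mem_toFinset.mp hP).1.1)).mp hsub
    exact hQ P (hfin.mem_toFinset.mp hPmem) hQP
  -- reduction powers
  set r := max n₀ M with hr
  have hJr : J * I ^ r = I ^ (r + 1) := by
    calc J * I ^ r = J * (I ^ n₀ * I ^ (r - n₀)) := by
          rw [← pow_add]
          congr 2
          omega
      _ = (J * I ^ n₀) * I ^ (r - n₀) := by rw [mul_assoc]
      _ = I ^ (n₀ + 1) * I ^ (r - n₀) := by rw [hJn]
      _ = I ^ (r + 1) := by rw [← pow_add]; congr 1; omega
  have hredpow : ∀ m2 : ℕ, I ^ (r + m2) = J ^ m2 * I ^ r := by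
    intro m2
    induction m2 with
    | zero => simp
    | succ m2 ih =>
      calc I ^ (r + (m2 + 1)) = I ^ ((r + m2) + 1) := by rw [Nat.add_assoc]
        _ = I ^ (r + m2) * I := pow_succ I (r + m2)
        _ = (J ^ m2 * I ^ r) * I := by rw [ih]
        _ = J ^ m2 * (I ^ r * I) := by rw [mul_assoc]
        _ = J ^ m2 * I ^ (r + 1) := by rw [← pow_succ]
        _ = J ^ m2 * (J * I ^ r) := by rw [hJr]
        _ = J ^ (m2 + 1) * I ^ r := by rw [← mul_assoc, ← pow_succ]
  -- choose c₁ and c₂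
  have hnotK : ∀ P ∈ minimalPrimes R, ¬ K ^ (n - 1) ≤ P := by
    intro P hP hle
    have hPp : P.IsPrime := hP.1.1
    apply hIP P hP
    intro y hy
    have hy2 : y ^ ((ℓ + w) * (n - 1)) ∈ P := by
      apply hle
      rw [hK, ← pow_mul]
      exact Ideal.pow_mem_pow hy _
    exact hPp.mem_of_pow_mem _ hy2
  have hnotJ : ∀ P ∈ minimalPrimes R, ¬ J ^ (r + ℓ + 1) ≤ P := by
    intro P hP hle
    have hPp : P.IsPrime := hP.1.1
    apply hIP P hP
    intro y hy
    have hJP : J ≤ P := by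
      intro x hx
      exact hPp.mem_of_pow_mem _ (hle (Ideal.pow_mem_pow hx _))
    have hy2 : y ^ (n₀ + 1) ∈ P := by
      apply hJP
      have : I ^ (n₀ + 1) ≤ J := by
        rw [← hJn]
        exact Ideal.mul_le_left
      exact this (Ideal.pow_mem_pow hy _)
    exact hPp.mem_of_pow_mem _ hy2
  obtain ⟨c₁, hc₁K, hc₁P⟩ := havoid (K ^ (n - 1)) hnotK
  obtain ⟨c₂, hc₂J, hc₂P⟩ := havoid (J ^ (r + ℓ + 1)) hnotJ
  refine ⟨c₁ * c₂, ?_, n + r, ?_⟩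
  · intro P hP hc
    have hPp : P.IsPrime := hP.1.1
    rcases hPp.mem_or_mem hc with h | h
    · exact hc₁P P hP h
    · exact hc₂P P hP h
  · intro e he
    have hq2 : n + r < p ^ e := by
      calc n + r < 2 ^ (n + r) := Nat.lt_two_pow_self
        _ ≤ p ^ (n + r) := Nat.pow_le_pow_left hp.two_le _
        _ ≤ p ^ e := Nat.pow_le_pow_right hp.pos he
    set q := p ^ e with hq
    have hqn : n ≤ q := by omega
    have hq1 : 1 ≤ q := by omega
    -- c₁ * z^q ∈ K^q
    have h1 : Ideal.span {z ^ q} ≤ K * (K ^ (q - n) * W) := by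
      have h8 : Ideal.span {z ^ q} = Ideal.span {z ^ (q - n)} * Ideal.span {z ^ n} := by
        rw [Ideal.span_singleton_mul_span_singleton, ← pow_add, Nat.sub_add_cancel hqn]
      rw [h8]
      calc Ideal.span {z ^ (q - n)} * Ideal.span {z ^ n}
          ≤ Ideal.span {z ^ (q - n)} * (K * W) := by
            apply Ideal.mul_mono_right
            rw [Ideal.span_le]
            intro y hy
            rw [Set.mem_singleton_iff] at hy
            subst hy
            exact hbase
        _ = K * (Ideal.span {z ^ (q - n)} * W) := by rw [mul_left_comm]
        _ ≤ K * (K ^ (q - n) * W) := Ideal.mul_mono_right (hzmW _)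
    have h2 : c₁ * z ^ q ∈ K ^ q := by
      have hmm : c₁ * z ^ q ∈ K ^ (n - 1) * (K * (K ^ (q - n) * W)) :=
        Ideal.mul_mem_mul hc₁K (h1 (Ideal.subset_span (Set.mem_singleton _)))
      have hle : K ^ (n - 1) * (K * (K ^ (q - n) * W)) ≤ K ^ q := by
        have hle2 : K ^ (n - 1) * (K * (K ^ (q - n) * W)) = K ^ q * W := by
          rw [← mul_assoc, ← mul_assoc, ← pow_succ, ← pow_add]
          congr 2
          omega
        rw [hle2]
        exact Ideal.mul_le_left
      exact hle hmm
    -- pass to J-powers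
    have hqlw : q ≤ (ℓ + w) * q := Nat.le_mul_of_pos_left q (by omega)
    have h3 : c₁ * z ^ q ∈ J ^ ((ℓ + w) * q - r) * I ^ r := by
      have hKq : K ^ q = I ^ (r + ((ℓ + w) * q - r)) := by
        rw [hK, ← pow_mul]
        congr 1
        omega
      rw [hKq, hredpow] at h2
      exact h2
    have h5 : c₁ * z ^ q ∈ J ^ ((ℓ + w) * q - r) * I ^ M := by
      have hle : J ^ ((ℓ + w) * q - r) * I ^ r ≤ J ^ ((ℓ + w) * q - r) * I ^ M :=
        Ideal.mul_mono_right (Ideal.pow_le_pow_right (le_max_right n₀ M))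
      exact hle h3
    have h6 : (c₁ * c₂) * z ^ q ∈ J ^ ((ℓ + w) * q + ℓ + 1) * I ^ M := by
      have heq9 : (c₁ * c₂) * z ^ q = c₂ * (c₁ * z ^ q) := by ring
      rw [heq9]
      have hmm := Ideal.mul_mem_mul hc₂J h5
      have hle : J ^ (r + ℓ + 1) * (J ^ ((ℓ + w) * q - r) * I ^ M)
          ≤ J ^ ((ℓ + w) * q + ℓ + 1) * I ^ M := by
        rw [← mul_assoc, ← pow_add]
        apply Ideal.mul_mono_left
        apply Ideal.pow_le_pow_right
        omega
      exact hle hmm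
    -- conclude with the main lemma
    have hfinal : ∀ y ∈ J ^ ((ℓ + w) * q + ℓ + 1) * I ^ M, y ∈ bracketPow (𝔄 ^ (w + 1)) q := by
      intro y hy
      refine Submodule.mul_induction_on hy ?_ ?_
      · intro x₂ hx₂ v₂ hv₂
        have hx₂' : x₂ ∈ partialSpan a ℓ ^ ((ℓ + w) * q + ℓ + 1) := by
          rw [partialSpan_top]
          exact hx₂
        have harith : q * (w + ℓ) + 1 ≤ ((ℓ + w) * q + ℓ + 1) + q * 0 := by
          have : q * (w + ℓ) = (ℓ + w) * q := by ring
          omega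
        have hone : (1 : R) ∈ 𝔄 ^ 0 := by
          rw [pow_zero, Ideal.one_eq_top]
          exact Submodule.mem_top
        have := main_lemma p hp a t I haI w M g ht0 htcol e ℓ le_rfl 0
          ((ℓ + w) * q + ℓ + 1) harith 1 hone x₂ hx₂' v₂ hv₂
        simpa using this
      · intro y₁ y₂ h₁ h₂
        exact add_mem h₁ h₂
    exact hfinal _ h6
end

section
/- Let R be a commutative Noetherian ring, let J ⊆ I be ideals of R, let M ≥ 0 be an integer, and let Q be a prime ideal of R containing I. If (J I^M : I^{M+1}) is not contained in Q, then for every integer t ≥ 1 the ideal (J^t I^M : I^{M+t}) is not contained in Q. -/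
/-- Let `R` be a commutative Noetherian ring, `J ⊆ I` ideals, `M ≥ 0`, and `Q` a prime
containing `I`.  If `(J I^M : I^{M+1})` is not contained in `Q`, then for every `t ≥ 1` the
ideal `(J^t I^M : I^{M+t})` is not contained in `Q`. -/
theorem colon_pow_not_le_prime {R : Type*} [CommRing R] [IsNoetherianRing R]
    (J I : Ideal R) (hJI : J ≤ I) (M : ℕ) (Q : Ideal R) (hQ : Q.IsPrime) (hIQ : I ≤ Q)
    (h : ¬ (J * I ^ M).colon ((I ^ (M + 1) : Ideal R) : Set R) ≤ Q) :
    ∀ t : ℕ, 1 ≤ t → ¬ (J ^ t * I ^ M).colon ((I ^ (M + t) : Ideal R) : Set R) ≤ Q := by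
  obtain ⟨x, hxc, hxQ⟩ := SetLike.not_le_iff_exists.mp h
  -- span form of the colon membership
  have hx1 : Ideal.span {x} * I ^ (M + 1) ≤ J * I ^ M := by
    rw [Ideal.span_singleton_mul_le_iff]
    intro p hp
    exact (Submodule.mem_colon.mp hxc) p hp
  have key : ∀ t : ℕ, 1 ≤ t → Ideal.span {x ^ t} * I ^ (M + t) ≤ J ^ t * I ^ M := by
    intro t ht
    induction t with
    | zero => omega
    | succ t ih =>
      rcases Nat.eq_or_lt_of_le ht with h1 | h1
      · simpa [← h1] using hx1
      · have ht' : 1 ≤ t := by omega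
        have iht := ih ht'
        calc Ideal.span {x ^ (t + 1)} * I ^ (M + (t + 1))
            = (Ideal.span {x ^ t} * I ^ (M + t)) * (Ideal.span {x} * I ^ 1) := by
              rw [pow_succ, ← Ideal.span_singleton_mul_span_singleton, pow_succ]
              ring
          _ ≤ (J ^ t * I ^ M) * (Ideal.span {x} * I ^ 1) := by gcongr
          _ = J ^ t * (Ideal.span {x} * I ^ (M + 1)) := by rw [pow_succ]; ring
          _ ≤ J ^ t * (J * I ^ M) := by gcongr
          _ = J ^ (t + 1) * I ^ M := by rw [pow_succ]; ring
  intro t ht hle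
  have hxt : x ^ t ∈ (J ^ t * I ^ M).colon ((I ^ (M + t) : Ideal R) : Set R) := by
    rw [Submodule.mem_colon]
    intro p hp
    have : x ^ t * p ∈ Ideal.span {x ^ t} * I ^ (M + t) :=
      Ideal.mul_mem_mul (Ideal.mem_span_singleton_self _) hp
    exact key t ht this
  exact hxQ (hQ.mem_of_pow_mem t (hle hxt))
end

section
/- Let R be a commutative ring, let J ⊆ I and H be ideals of R, let a ∈ I and t ∈ R, and set b = a + t, K = J + H, and L = I + H. Suppose that L : b = L and K : b = K. Then (K + (b)) : t ⊆ L + (K : (J : t)). -/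
/-- Let `R` be a commutative ring, `J ⊆ I` and `H` ideals, `a ∈ I`, `t ∈ R`, and set
`b = a + t`, `K = J + H`, `L = I + H`.  If `L : b = L` and `K : b = K`, then
`(K + (b)) : t ⊆ L + (K : (J : t))`. -/
theorem colon_add_span_le {R : Type*} [CommRing R] (J I H : Ideal R) (hJI : J ≤ I)
    (a t : R) (ha : a ∈ I) (b : R) (hb : b = a + t)
    (K L : Ideal R) (hK : K = J + H) (hL : L = I + H)
    (hLb : L.colon (Ideal.span {b}) = L) (hKb : K.colon (Ideal.span {b}) = K) :
    (K + Ideal.span {b}).colon (Ideal.span {t}) ≤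
      L + K.colon (J.colon (Ideal.span {t})) := by
  have hKL : K ≤ L := by
    rw [hK, hL]; exact sup_le_sup_right hJI H
  have hIL : I ≤ L := by rw [hL]; exact le_sup_left
  have hJK : J ≤ K := by rw [hK]; exact le_sup_left
  subst hb
  intro x hx
  rw [Ideal.mem_colon_span_singleton] at hx
  obtain ⟨k, hk, z, hz, hsum⟩ := Submodule.mem_sup.mp hx
  obtain ⟨r, hr⟩ := Ideal.mem_span_singleton'.mp hz
  have hxr : x - r ∈ L := by
    rw [← hLb, Ideal.mem_colon_span_singleton]
    have hb' : x * t = k + r * (a + t) := by rw [hr, hsum]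
    have : (x - r) * (a + t) = a * x + k := by linear_combination hb'
    rw [this]
    exact L.add_mem (hIL (I.mul_mem_right x ha)) (hKL hk)
  have hrmem : r ∈ K.colon (J.colon (Ideal.span {t})) := by
    rw [Submodule.mem_colon]
    intro y hy
    rw [SetLike.mem_coe, Ideal.mem_colon_span_singleton] at hy
    rw [smul_eq_mul]
    rw [← hKb, Ideal.mem_colon_span_singleton]
    have hb' : x * t = k + r * (a + t) := by rw [hr, hsum]
    have : r * y * (a + t) = (y * t) * x - y * k := by linear_combination -y * hb'
    rw [this]
    exact K.sub_mem (K.mul_mem_right x (hJK hy)) (K.mul_mem_left y hk)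
  have : x = (x - r) + r := by ring
  rw [this]
  exact Submodule.add_mem_sup hxr hrmem
end

section
/- Let R be a commutative Noetherian ring, let I be an ideal of R, and let M ≥ 1 be an integer. Then there exist an element c ∈ R⁰ and an integer N ≥ 1 such that c I^n ⊆ I^{n+M} for all n ≥ N. -/
/-- If `P` is a minimal prime containing `I`, then some power of `I` is killed by an
element outside `P`. -/
lemma exists_ann_of_le_minimalPrime {R : Type*} [CommRing R] [IsNoetherianRing R]
    (I P : Ideal R) (hP : P ∈ minimalPrimes R) (hIP : I ≤ P) :
    ∃ s : R, s ∉ P ∧ ∃ k : ℕ, ∀ x ∈ I ^ k, s * x = 0 := by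
  haveI hPp : P.IsPrime := hP.1.1
  set S := Localization P.primeCompl
  haveI : IsNoetherianRing S := IsLocalization.isNoetherianRing P.primeCompl S ‹_›
  -- the image of `I` lies in the nilradical of `S`
  have hmap : I.map (algebraMap R S) ≤ nilradical S := by
    rw [Ideal.map_le_iff_le_comap]
    intro x hx
    have hx' : algebraMap R S x ∈ IsLocalRing.maximalIdeal S :=
      (IsLocalization.AtPrime.to_map_mem_maximal_iff S P x).mpr (hIP hx)
    haveI := Ring.KrullDimLE.of_isLocalization P hP S
    exact Ring.KrullDimLE.isNilpotent_iff_mem_maximalIdeal.mpr hx'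
  obtain ⟨k, hk⟩ := IsNoetherianRing.isNilpotent_nilradical S
  have hzero : ∀ x ∈ I ^ k, algebraMap R S x = 0 := by
    intro x hx
    have : algebraMap R S x ∈ (I.map (algebraMap R S)) ^ k := by
      rw [← Ideal.map_pow]
      exact Ideal.mem_map_of_mem _ hx
    have hle : (I.map (algebraMap R S)) ^ k ≤ (⊥ : Ideal S) := by
      calc (I.map (algebraMap R S)) ^ k ≤ (nilradical S) ^ k :=
            Ideal.pow_right_mono hmap k
        _ = ⊥ := by rw [← Ideal.zero_eq_bot, ← hk]
      -- note: `hk : nilradical S ^ k = 0`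
    simpa using hle this
  -- `I ^ k` is finitely generated
  obtain ⟨t, ht⟩ : (I ^ k).FG := IsNoetherian.noetherian _
  classical
  -- for each generator choose an annihilator in the prime complement
  have hex : ∀ x ∈ t, ∃ m : P.primeCompl, (m : R) * x = 0 := by
    intro x hx
    exact (IsLocalization.map_eq_zero_iff P.primeCompl S x).mp
      (hzero x (ht ▸ Ideal.subset_span hx))
  let g : R → P.primeCompl := fun x =>
    if h : ∃ m : P.primeCompl, (m : R) * x = 0 then h.choose else 1
  have hg : ∀ x ∈ t, (g x : R) * x = 0 := by
    intro x hx
    have h := hex x hx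
    simp only [g, dif_pos h]
    exact h.choose_spec
  set sM : P.primeCompl := ∏ x ∈ t, g x with hsM
  refine ⟨(sM : R), sM.2, k, ?_⟩
  have hker : I ^ k ≤ LinearMap.ker (LinearMap.lsmul R R (sM : R)) := by
    rw [← ht, Ideal.span_le]
    intro x hx
    simp only [SetLike.mem_coe, LinearMap.mem_ker, LinearMap.lsmul_apply, smul_eq_mul]
    have : (sM : R) = (g x : R) * ∏ y ∈ t.erase x, (g y : R) := by
      rw [hsM]
      push_cast
      exact (Finset.mul_prod_erase t (fun y => (g y : R)) hx).symm
    rw [this, mul_right_comm, hg x hx, zero_mul]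
  intro x hx
  have := hker hx
  simpa only [LinearMap.mem_ker, LinearMap.lsmul_apply, smul_eq_mul] using this

/-- Let `R` be a commutative Noetherian ring, `I` an ideal and `M ≥ 1`.  Then there exist
`c ∈ R⁰` and `N ≥ 1` such that `c I^n ⊆ I^{n+M}` for all `n ≥ N`. -/
theorem exists_mem_Rzero_mul_pow_subset {R : Type*} [CommRing R] [IsNoetherianRing R]
    (I : Ideal R) (M : ℕ) (hM : 1 ≤ M) :
    ∃ c : R, MemRzero c ∧ ∃ N : ℕ, 1 ≤ N ∧
      ∀ n : ℕ, N ≤ n → ∀ x ∈ I ^ n, c * x ∈ I ^ (n + M) := by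
  classical
  -- the increasing chain of colon ideals
  have hmono : Monotone (fun n : ℕ => (I ^ (n + M)).colon ((I ^ n : Ideal R) : Set R)) := by
    apply monotone_nat_of_le_succ
    intro n r hr
    rw [Submodule.mem_colon] at hr ⊢
    intro x hx
    rw [pow_succ] at hx
    refine Submodule.mul_induction_on hx ?_ ?_
    · intro a ha b hb
      have : r * (a * b) = (r * a) * b := by ring
      rw [smul_eq_mul, this]
      have : (r * a) * b ∈ I ^ (n + M) * I := Ideal.mul_mem_mul (by
        simpa only [smul_eq_mul] using hr a ha) hb
      rwa [← pow_succ, show n + M + 1 = n + 1 + M by omega] at this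
    · intro a b ha hb
      rw [smul_eq_mul, mul_add]
      exact Ideal.add_mem _ (by simpa only [smul_eq_mul] using ha)
        (by simpa only [smul_eq_mul] using hb)
  set f : ℕ →o Ideal R := ⟨fun n => (I ^ (n + M)).colon ((I ^ n : Ideal R) : Set R), hmono⟩ with hf
  obtain ⟨N₀, hN₀⟩ := (monotone_stabilizes_iff_noetherian.mpr
    (isNoetherianRing_iff.mp ‹_›)) f
  set N : ℕ := N₀ + 1 with hN
  set J : Ideal R := f N with hJ
  have hstab : ∀ n : ℕ, N ≤ n → f n = J := fun n hn =>
    ((hN₀ n (le_trans (Nat.le_succ _) hn)).symm.trans (hN₀ N (Nat.le_succ _)))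
  -- J is not contained in any minimal prime
  have hJP : ∀ P ∈ minimalPrimes R, ¬ J ≤ P := by
    intro P hP hle
    haveI hPp : P.IsPrime := hP.1.1
    by_cases hIP : I ≤ P
    · obtain ⟨s, hsP, k, hs⟩ := exists_ann_of_le_minimalPrime I P hP hIP
      have hsJ : s ∈ f (max N k) := by
        simp only [hf, OrderHom.coe_mk, Submodule.mem_colon]
        intro x hx
        have : x ∈ I ^ k := Ideal.pow_le_pow_right (le_max_right N k) hx
        rw [smul_eq_mul, hs x this]
        exact zero_mem _
      rw [hstab _ (le_max_left N k)] at hsJ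
      exact hsP (hle hsJ)
    · obtain ⟨tt, htI, htP⟩ := SetLike.not_le_iff_exists.mp hIP
      have htJ : tt ^ M ∈ f N := by
        simp only [hf, OrderHom.coe_mk, Submodule.mem_colon]
        intro x hx
        rw [smul_eq_mul]
        have : tt ^ M * x ∈ I ^ M * I ^ N :=
          Ideal.mul_mem_mul (Ideal.pow_mem_pow htI M) hx
        rwa [← pow_add, add_comm M N] at this
      exact htP (hPp.mem_of_pow_mem M (hle htJ))
  -- prime avoidance
  have hfin := minimalPrimes.finite_of_isNoetherianRing R
  set s : Finset (Ideal R) := hfin.toFinset with hs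
  have hnot : ¬ ((J : Set R) ⊆ ⋃ P ∈ (↑s : Set (Ideal R)), (P : Set R)) := by
    intro h
    have hp : ∀ P ∈ s, P ≠ (⊥ : Ideal R) → P ≠ (⊥ : Ideal R) → P.IsPrime := by
      intro P hPs _ _
      exact ((hfin.mem_toFinset.mp hPs).1.1 : P.IsPrime)
    obtain ⟨P, hPs, hPle⟩ := (Ideal.subset_union_prime (⊥ : Ideal R) (⊥ : Ideal R) hp).mp h
    exact hJP P (hfin.mem_toFinset.mp hPs) hPle
  obtain ⟨c, hcJ, hcU⟩ := Set.not_subset.mp hnot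
  refine ⟨c, ?_, N, Nat.le_add_left 1 N₀, ?_⟩
  · intro P hP hcP
    exact hcU (Set.mem_biUnion (hfin.mem_toFinset.mpr hP) hcP)
  · intro n hn x hx
    have hcn : c ∈ f n := by rw [hstab n hn]; exact hcJ
    simp only [hf, OrderHom.coe_mk, Submodule.mem_colon] at hcn
    simpa only [smul_eq_mul] using hcn x hx
end
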